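/- arXiv:2110.12397 — 2 statements merged into one kernel-verified Lean document; each statement's English description precedes it below -/
import Mathlib

section
/- Let X be a metric space, S ⊆ X a compact set, Γ ⊆ X a set (the solution set), A : X → Set X a point-to-set algorithmic map, and z : X → ℝ a continuous function. Assume: (i) for every x ∉ Γ and every y ∈ A x, z y < z x; (ii) for every x ∈ Γ and every y ∈ A x, z y ≤ z x; (iii) A is closed at every point x ∉ Γ, meaning that for every sequence (x_k) with x_k → x, every sequence (y_k) with y_k ∈ A x_k for all k and y_k → y, one has y ∈ A x. Let (x_k) be a sequence with x_{k+1} ∈ A x_k and x_k ∈ S for all k. Then the limit of every convergent subsequence of (x_k) belongs to Γ. -/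
open Filter Topology

/-- **Zangwill's global convergence theorem.** Let `X` be a metric space, `S` a compact
subset, `Γ` the solution set, `A` a point-to-set algorithmic map and `z` a continuous
descent function for `(Γ, A)`. If `A` is closed at every point outside `Γ` and the
iterates `x_{k+1} ∈ A (x_k)` stay in `S`, then every convergent subsequence of the
iterates converges to a point of `Γ`. -/
theorem zangwill_global_convergence
    {X : Type*} [MetricSpace X]
    (S : Set X) (hS : IsCompact S)
    (Γ : Set X) (A : X → Set X) (z : X → ℝ) (hz : Continuous z)
    (hdescent_strict : ∀ x ∉ Γ, ∀ y ∈ A x, z y < z x)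
    (hdescent : ∀ x ∈ Γ, ∀ y ∈ A x, z y ≤ z x)
    (hclosed : ∀ x ∉ Γ, ∀ xk : ℕ → X, Tendsto xk atTop (𝓝 x) →
      ∀ yk : ℕ → X, (∀ k, yk k ∈ A (xk k)) → ∀ y : X, Tendsto yk atTop (𝓝 y) → y ∈ A x)
    (x : ℕ → X) (hiter : ∀ k, x (k + 1) ∈ A (x k)) (hxS : ∀ k, x k ∈ S) :
    ∀ φ : ℕ → ℕ, StrictMono φ → ∀ L : X, Tendsto (x ∘ φ) atTop (𝓝 L) → L ∈ Γ := by
  intro φ hφ L hL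
  by_contra hLΓ
  have step : ∀ k, z (x (k + 1)) ≤ z (x k) := by
    intro k
    by_cases h : x k ∈ Γ
    · exact hdescent _ h _ (hiter k)
    · exact (hdescent_strict _ h _ (hiter k)).le
  have anti : Antitone (fun k => z (x k)) := antitone_nat_of_succ_le step
  have hbdd : BddBelow (Set.range fun k => z (x k)) := by
    obtain ⟨C, hC⟩ := (hS.image hz).bddBelow
    exact ⟨C, by rintro _ ⟨k, rfl⟩; exact hC ⟨x k, hxS k, rfl⟩⟩
  have hconv : Tendsto (fun k => z (x k)) atTop (𝓝 (⨅ k, z (x k))) :=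
    tendsto_atTop_ciInf anti hbdd
  have hzL : Tendsto (fun k => z (x (φ k))) atTop (𝓝 (z L)) := (hz.tendsto L).comp hL
  have hc : (⨅ k, z (x k)) = z L :=
    tendsto_nhds_unique (hconv.comp hφ.tendsto_atTop) hzL
  obtain ⟨p, hpS, ψ, hψ, hp⟩ :=
    hS.tendsto_subseq (x := fun k => x (φ k + 1)) (fun k => hxS _)
  have hxφψ : Tendsto (fun k => x (φ (ψ k))) atTop (𝓝 L) := hL.comp hψ.tendsto_atTop
  have hpA : p ∈ A L := hclosed L hLΓ _ hxφψ _ (fun k => hiter _) p hp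
  have h1 : z p < z L := hdescent_strict L hLΓ p hpA
  have h2 : Tendsto (fun k => z (x (φ (ψ k) + 1))) atTop (𝓝 (z p)) := (hz.tendsto p).comp hp
  have hmono : StrictMono (fun k => φ (ψ k) + 1) := fun a b hab =>
    Nat.succ_lt_succ (hφ (hψ hab))
  have h3 : Tendsto (fun k => z (x (φ (ψ k) + 1))) atTop (𝓝 (z L)) := by
    have := hconv.comp hmono.tendsto_atTop
    rwa [hc] at this
  exact absurd (tendsto_nhds_unique h2 h3 ▸ h1) (lt_irrefl _)
end

section
/- Let E be a real normed vector space and f : E → ℝ a continuous function. For x, d ∈ E define the line-search solution set Γ(x,d) = { y ∈ E | ∃ h ≥ 0, y = x + h • d, and f(y) ≤ f(x + h' • d) for all h' ≥ 0 }. Suppose (x_k), (d_k), (y_k) are sequences in E with x_k → x₀, d_k → d₀, ‖d_k‖ = 1 for every k, y_k ∈ Γ(x_k, d_k) for every k, and y_k → y₀. Then y₀ ∈ Γ(x₀, d₀). -/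
open Filter Topology

/-- The line-search solution set: points on the ray from `x` in direction `d`
that minimize `f` along that ray. -/
def lineSearchSet {E : Type*} [NormedAddCommGroup E] [NormedSpace ℝ E]
    (f : E → ℝ) (x d : E) : Set E :=
  {y | ∃ h : ℝ, 0 ≤ h ∧ y = x + h • d ∧ ∀ h' : ℝ, 0 ≤ h' → f y ≤ f (x + h' • d)}

/-- Closedness of the line-search solution map for unit directions. -/
theorem lineSearchSet_closed
    {E : Type*} [NormedAddCommGroup E] [NormedSpace ℝ E]
    (f : E → ℝ) (hf : Continuous f)
    (xk dk yk : ℕ → E) (x₀ d₀ y₀ : E)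
    (hx : Tendsto xk atTop (𝓝 x₀))
    (hd : Tendsto dk atTop (𝓝 d₀))
    (hunit : ∀ k, ‖dk k‖ = 1)
    (hy : ∀ k, yk k ∈ lineSearchSet f (xk k) (dk k))
    (hylim : Tendsto yk atTop (𝓝 y₀)) :
    y₀ ∈ lineSearchSet f x₀ d₀ := by
  -- extract step sizes
  choose h h0 hyeq hmin using hy
  -- h k = ‖yk k - xk k‖
  have hkeq : ∀ k, h k = ‖yk k - xk k‖ := by
    intro k
    rw [hyeq k, add_sub_cancel_left, norm_smul, hunit k, mul_one,
      Real.norm_eq_abs, abs_of_nonneg (h0 k)]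
  set h₀ : ℝ := ‖y₀ - x₀‖ with hh₀
  have hhlim : Tendsto h atTop (𝓝 h₀) := by
    have : Tendsto (fun k => ‖yk k - xk k‖) atTop (𝓝 ‖y₀ - x₀‖) :=
      (hylim.sub hx).norm
    simpa [funext hkeq] using this
  have hlim2 : Tendsto (fun k => xk k + h k • dk k) atTop (𝓝 (x₀ + h₀ • d₀)) :=
    hx.add (hhlim.smul hd)
  have hy₀ : y₀ = x₀ + h₀ • d₀ := by
    refine tendsto_nhds_unique ?_ hlim2
    simpa [funext hyeq] using hylim
  refine ⟨h₀, norm_nonneg _, hy₀, fun h' h'0 => ?_⟩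
  have hle : ∀ k, f (yk k) ≤ f (xk k + h' • dk k) := fun k => hmin k h' h'0
  have h1 : Tendsto (fun k => f (yk k)) atTop (𝓝 (f y₀)) :=
    (hf.tendsto y₀).comp hylim
  have h2 : Tendsto (fun k => f (xk k + h' • dk k)) atTop (𝓝 (f (x₀ + h' • d₀))) :=
    (hf.tendsto _).comp (hx.add ((tendsto_const_nhds).smul hd))
  exact le_of_tendsto_of_tendsto' h1 h2 hle
end
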